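/- Let i : A → X be a smooth map of Frölicher spaces such that for every homotopy G : I × A → Z with G(0,·) = f ∘ i extending smoothly over X (in the weakened sense with reparametrized homotopy G′(t,a) = G(α_ε(t),a)), an extension F : I × X → Z exists. Then every smooth function f : A → ℝ factors through i: there exists a smooth f̃ : X → ℝ with f = f̃ ∘ i. Consequently a smooth cofibration is an initial morphism in the category of Frölicher spaces. -/

import Mathlib

open Set Filter

/-- A Frölicher space: a set with mutually saturated families of curves and functions. -/
structure FrolicherSpace (X : Type) where
  curves : Set (ℝ → X)
  functions : Set (X → ℝ)
  compat : ∀ f ∈ functions, ∀ c ∈ curves, ContDiff ℝ (⊤ : ℕ∞) (f ∘ c)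
  sat_fun : ∀ f : X → ℝ, (∀ c ∈ curves, ContDiff ℝ (⊤ : ℕ∞) (f ∘ c)) → f ∈ functions
  sat_curve : ∀ c : ℝ → X, (∀ f ∈ functions, ContDiff ℝ (⊤ : ℕ∞) (f ∘ c)) → c ∈ curves

/-- The Frölicher structure generated by a set `F0` of functions. -/
def FrolicherSpace.gen {X : Type} (F0 : Set (X → ℝ)) : FrolicherSpace X where
  curves := {c | ∀ f ∈ F0, ContDiff ℝ (⊤ : ℕ∞) (f ∘ c)}
  functions := {f | ∀ c : ℝ → X,
    (∀ g ∈ F0, ContDiff ℝ (⊤ : ℕ∞) (g ∘ c)) → ContDiff ℝ (⊤ : ℕ∞) (f ∘ c)}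
  compat := fun f hf c hc => hf c hc
  sat_fun := fun _ h c hc => h c hc
  sat_curve := fun c h f hf => h f (fun c' hc' => hc' f hf)

/-- Smooth maps of Frölicher spaces. -/
def IsSmoothMap {X Y : Type} (FX : FrolicherSpace X) (FY : FrolicherSpace Y)
    (φ : X → Y) : Prop :=
  ∀ f ∈ FY.functions, (f ∘ φ) ∈ FX.functions

/-- The product of two Frölicher spaces. -/
def FrolicherSpace.prod {X Y : Type} (FX : FrolicherSpace X) (FY : FrolicherSpace Y) :
    FrolicherSpace (X × Y) :=
  FrolicherSpace.gen ({f | ∃ g ∈ FX.functions, f = g ∘ Prod.fst} ∪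
    {f | ∃ g ∈ FY.functions, f = g ∘ Prod.snd})

/-- The subspace structure on a subset of a Frölicher space. -/
def FrolicherSpace.sub {X : Type} (FX : FrolicherSpace X) (S : Set X) :
    FrolicherSpace S :=
  FrolicherSpace.gen {f | ∃ g ∈ FX.functions, ∀ x : S, f x = g ↑x}

/-- The underlying set of the unit interval. -/
abbrev UI : Type := ↥(Set.Icc (0 : ℝ) 1)

/-- `0` as a point of the unit interval. -/
def uzero : UI := ⟨0, by norm_num⟩

/-- `1` as a point of the unit interval. -/
def uone : UI := ⟨1, by norm_num⟩

/-- The usual unit interval `I` (subspace structure of `ℝ`). -/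
def intervalF : FrolicherSpace UI :=
  FrolicherSpace.gen {f | ∃ g : ℝ → ℝ, ContDiff ℝ (⊤ : ℕ∞) g ∧ ∀ x : UI, f x = g ↑x}

/-- The left flattened unit interval `𝐈⁻`: generated by the smooth functions on `[0,1]`
that are constant near `0`. -/
def IminusF : FrolicherSpace UI :=
  FrolicherSpace.gen {f | (∃ g : ℝ → ℝ, ContDiff ℝ (⊤ : ℕ∞) g ∧ ∀ x : UI, f x = g ↑x) ∧
    ∃ δ > (0 : ℝ), ∀ x : UI, (x : ℝ) < δ → f x = f uzero}

/-- The standard Frölicher structure on `ℝ`, generated by the identity. -/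
def FRreal : FrolicherSpace ℝ := FrolicherSpace.gen {(id : ℝ → ℝ)}

lemma gen_self_subset {X : Type} (F0 : Set (X → ℝ)) {f : X → ℝ} (hf : f ∈ F0) :
    f ∈ (FrolicherSpace.gen F0).functions :=
  fun c hc => hc f hf

lemma id_mem_FRreal : (id : ℝ → ℝ) ∈ FRreal.functions :=
  gen_self_subset _ rfl

lemma FRreal_comp {g : ℝ → ℝ} (hg : g ∈ FRreal.functions) {d : ℝ → ℝ}
    (hd : ContDiff ℝ (⊤ : ℕ∞) d) : ContDiff ℝ (⊤ : ℕ∞) (g ∘ d) := by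
  apply hg d
  intro e he
  rw [Set.mem_singleton_iff] at he
  subst he
  simpa using hd

lemma const_mem_functions {X : Type} (FX : FrolicherSpace X) (r : ℝ) :
    (fun _ => r : X → ℝ) ∈ FX.functions :=
  FX.sat_fun _ (fun c _ => by simpa [Function.comp_def] using contDiff_const (c := r))

lemma coe_mem_intervalF : (fun t : UI => (t : ℝ)) ∈ intervalF.functions :=
  gen_self_subset _ ⟨id, contDiff_id, fun _ => rfl⟩

/-- If `i : A → X` has the (weakened) smooth homotopy extension property — every smooth
homotopy `G : I × A → Z` with `G(0,·) = f ∘ i` extends to `F : I × X → Z` satisfying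
`F(0,·) = f` and `F ∘ (1 × i) = G'` where `G'(t,a) = G(α_ε t, a)` for some braking
function `α_ε` — then every smooth function `f : A → ℝ` factors through `i`, and
consequently `i` is an initial morphism: the curves of `A` are exactly those whose
composite with `i` is smooth in `X`. -/

theorem cofibration_initial
    (A X : Type) (FA : FrolicherSpace A) (FX : FrolicherSpace X)
    (i : A → X) (hi : IsSmoothMap FA FX i)
    (hcof : ∀ (Z : Type) (FZ : FrolicherSpace Z) (f : X → Z) (G : UI × A → Z),
      IsSmoothMap FX FZ f →
      IsSmoothMap (intervalF.prod FA) FZ G →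
      (∀ a, G (uzero, a) = f (i a)) →
      ∃ (F : UI × X → Z) (α : ℝ → ℝ) (ε : ℝ)
        (hmem : ∀ t : UI, α ↑t ∈ Set.Icc (0 : ℝ) 1),
        ε ∈ Set.Ioo (0 : ℝ) (1 / 2) ∧
        ContDiff ℝ (⊤ : ℕ∞) α ∧
        (∀ t, t ≤ ε → α t = 0) ∧
        (∀ t, 1 - ε ≤ t → α t = 1) ∧
        IsSmoothMap (intervalF.prod FX) FZ F ∧
        (∀ x, F (uzero, x) = f x) ∧
        (∀ (t : UI) (a : A), F (t, i a) = G (⟨α ↑t, hmem t⟩, a))) :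
    (∀ f ∈ FA.functions, ∃ ft ∈ FX.functions, f = ft ∘ i) ∧
    FA.curves = {c : ℝ → A | ∀ g ∈ FX.functions, ContDiff ℝ (⊤ : ℕ∞) (g ∘ i ∘ c)} := by
  have key : ∀ f ∈ FA.functions, ∃ ft ∈ FX.functions, f = ft ∘ i := by
    intro f hf
    have hsm1 : IsSmoothMap FX FRreal (fun _ => (0:ℝ)) := by
      intro g hg
      have h : (g ∘ (fun _ : X => (0 : ℝ))) = (fun _ : X => g 0) := rfl
      rw [h]
      exact const_mem_functions FX (g 0)
    have hsm2 : IsSmoothMap (intervalF.prod FA) FRreal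
        (fun p : UI × A => (p.1 : ℝ) * f p.2) := by
      intro g hg
      intro c hc
      have h1 : ContDiff ℝ (⊤ : ℕ∞) ((fun t : UI => (t : ℝ)) ∘ Prod.fst ∘ c) :=
        hc ((fun t : UI => (t : ℝ)) ∘ Prod.fst) (Or.inl ⟨_, coe_mem_intervalF, rfl⟩)
      have h2 : ContDiff ℝ (⊤ : ℕ∞) (f ∘ Prod.snd ∘ c) :=
        hc (f ∘ Prod.snd) (Or.inr ⟨f, hf, rfl⟩)
      have hGc : ContDiff ℝ (⊤ : ℕ∞) ((fun p : UI × A => (p.1 : ℝ) * f p.2) ∘ c) := by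
        have h : ((fun p : UI × A => (p.1 : ℝ) * f p.2) ∘ c) =
            fun s => (((fun t : UI => (t : ℝ)) ∘ Prod.fst ∘ c) s) * ((f ∘ Prod.snd ∘ c) s) := rfl
        rw [h]
        exact h1.mul h2
      exact FRreal_comp hg hGc
    have hinit : ∀ a, (fun p : UI × A => (p.1 : ℝ) * f p.2) (uzero, a) =
        (fun _ => (0:ℝ)) (i a) := by
      intro a
      show ((uzero : UI) : ℝ) * f a = 0
      simp [uzero]
    obtain ⟨F, α, ε, hmem, hε, hα, hα0, hα1, hFsm, hF0, hFi⟩ :=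
      hcof ℝ FRreal (fun _ => 0) (fun p => (p.1 : ℝ) * f p.2) hsm1 hsm2 hinit
    refine ⟨fun x => F (uone, x), ?_, ?_⟩
    · apply FX.sat_fun
      intro c hc
      have hF : (id ∘ F) ∈ (intervalF.prod FX).functions := hFsm id id_mem_FRreal
      have hcurve : ∀ g ∈ ({f | ∃ g ∈ intervalF.functions, f = g ∘ Prod.fst} ∪
          {f | ∃ g ∈ FX.functions, f = g ∘ Prod.snd} : Set (UI × X → ℝ)),
          ContDiff ℝ (⊤ : ℕ∞) (g ∘ (fun s : ℝ => (uone, c s))) := by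
        rintro g (⟨g0, hg0, rfl⟩ | ⟨g0, hg0, rfl⟩)
        · simpa [Function.comp_def] using contDiff_const (c := g0 uone)
        · exact FX.compat g0 hg0 c hc
      exact hF (fun s => (uone, c s)) hcurve
    · funext a
      have h1 := hFi uone a
      have ha : α ((uone : UI) : ℝ) = 1 := by
        have h : (1 : ℝ) - ε ≤ ((uone : UI) : ℝ) := by
          simp only [uone]
          linarith [hε.1]
        exact hα1 _ h
      show f a = F (uone, i a)
      rw [h1]
      show f a = α ((uone : UI) : ℝ) * f a
      rw [ha]
      ring
  refine ⟨key, ?_⟩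
  ext c
  simp only [Set.mem_setOf_eq]
  constructor
  · intro hc g hg
    exact FA.compat (g ∘ i) (hi g hg) c hc
  · intro hc
    apply FA.sat_curve
    intro f hf
    obtain ⟨ft, hft, rfl⟩ := key f hf
    exact hc ft hft
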